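/- Let r_1, r_2, …, r_n ∈ ℚ[G] and suppose r_i(e − p_j) − r_j(e − p_i) ∈ ℤ[G] for all i, j = 1, 2, …, n. Then there exist u_1, u_2, …, u_n ∈ ℤ[G] such that (r_i − u_i)(e − p_j) = (r_j − u_j)(e − p_i) for all i, j = 1, 2, …, n. -/

import Mathlib

open MonoidAlgebra Finset

/-- The integral group ring ℤ[G]. -/
noncomputable abbrev ZG (G : Type) [CommGroup G] := MonoidAlgebra ℤ G

/-- The rational group ring ℚ[G]. -/
noncomputable abbrev QG (G : Type) [CommGroup G] := MonoidAlgebra ℚ G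

/-- The canonical embedding ℤ[G] → ℚ[G]. -/
noncomputable def toQ (G : Type) [CommGroup G] : ZG G →ₐ[ℤ] QG G :=
  MonoidAlgebra.lift ℤ (QG G) G (MonoidAlgebra.of ℚ G)

/-- "x ∈ ℤ[G]" for an element x of ℚ[G]. -/
def MemZG (G : Type) [CommGroup G] (x : QG G) : Prop := ∃ z : ZG G, toQ G z = x

/-- G = ℤ_{m₁} × ℤ_{m₂} × ⋯ × ℤ_{mₙ}, written multiplicatively. -/
abbrev Gr {n : ℕ} (m : Fin n → ℕ) : Type := (i : Fin n) → Multiplicative (ZMod (m i))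

/-- pᵢ, the generator of the i-th factor of G. -/
def pgen {n : ℕ} (m : Fin n → ℕ) (i : Fin n) : Gr m :=
  Pi.mulSingle i (Multiplicative.ofAdd 1)

/-- Pᵢ = e + pᵢ + pᵢ² + ⋯ + pᵢ^{mᵢ−1} ∈ ℤ[G]. -/
noncomputable def Pel {n : ℕ} (m : Fin n → ℕ) (i : Fin n) : ZG (Gr m) :=
  ∑ k ∈ Finset.range (m i), (MonoidAlgebra.of ℤ (Gr m) (pgen m i)) ^ k

/-- Qᵢ = ∏_{j ≠ i} Pⱼ ∈ ℤ[G]. -/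
noncomputable def Qel {n : ℕ} (m : Fin n → ℕ) (i : Fin n) : ZG (Gr m) :=
  ∏ j ∈ Finset.univ.erase i, Pel m j

/-- N = Σ_{g ∈ G} g ∈ ℤ[G]. -/
noncomputable def Nel {n : ℕ} (m : Fin n → ℕ) [∀ i, NeZero (m i)] : ZG (Gr m) :=
  ∑ g : Gr m, MonoidAlgebra.of ℤ (Gr m) g


set_option linter.unusedSectionVars false

instance coeFunMA (R G : Type) [CommRing R] : CoeFun (MonoidAlgebra R G) (fun _ => G → R) :=
  ⟨fun f => f.coeff⟩

lemma zmod_eq_cast_iff (M : ℕ) [NeZero M] (z : ZMod M) (k : ℕ) (hk : k < M) :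
    z = (k : ZMod M) ↔ k = z.val := by
  constructor
  · intro h; rw [h, ZMod.val_cast_of_lt hk]
  · intro h; subst h; exact (ZMod.natCast_rightInverse z).symm

noncomputable def Xel' (R : Type) [CommRing R] {n : ℕ} (m : Fin n → ℕ) (i : Fin n) :
    MonoidAlgebra R (Gr m) := 1 - MonoidAlgebra.of R (Gr m) (pgen m i)

noncomputable def Pel' (R : Type) [CommRing R] {n : ℕ} (m : Fin n → ℕ) (i : Fin n) :
    MonoidAlgebra R (Gr m) :=
  ∑ k ∈ Finset.range (m i), (MonoidAlgebra.of R (Gr m) (pgen m i)) ^ k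

section Dev
variable {R : Type} [CommRing R] {n : ℕ} (m : Fin n → ℕ) [∀ i, NeZero (m i)]

lemma Pel'_mul_Xel'_pre (i : Fin n) (h2 : (MonoidAlgebra.of R (Gr m) (pgen m i)) ^ (m i) = 1) :
    Pel' R m i * Xel' R m i = 0 := by
  calc (∑ k ∈ Finset.range (m i), (MonoidAlgebra.of R (Gr m) (pgen m i)) ^ k) *
      (1 - MonoidAlgebra.of R (Gr m) (pgen m i))
      = -((∑ k ∈ Finset.range (m i), (MonoidAlgebra.of R (Gr m) (pgen m i)) ^ k) *
        (MonoidAlgebra.of R (Gr m) (pgen m i) - 1)) := by ring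
    _ = -(((MonoidAlgebra.of R (Gr m) (pgen m i)) ^ (m i)) - 1) := by rw [geom_sum_mul]
    _ = 0 := by rw [h2]; ring

lemma pgen_pow_same (i : Fin n) (k : ℕ) :
    (pgen m i ^ k) i = Multiplicative.ofAdd (k : ZMod (m i)) := by
  induction k with
  | zero => simp [pgen]
  | succ k ih =>
      rw [pow_succ, Pi.mul_apply, ih, pgen, Pi.mulSingle_eq_same, ← ofAdd_add]
      push_cast
      ring_nf

lemma pgen_pow_ne {i j : Fin n} (hij : j ≠ i) (k : ℕ) : (pgen m i ^ k) j = 1 := by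
  induction k with
  | zero => simp
  | succ k ih => rw [pow_succ, Pi.mul_apply, ih, pgen, Pi.mulSingle_eq_of_ne hij, mul_one]

lemma pgen_pow_card (i : Fin n) : pgen m i ^ (m i) = 1 := by
  funext j
  by_cases hij : j = i
  · subst hij; rw [pgen_pow_same]; simp [ZMod.natCast_self]
  · rw [pgen_pow_ne m hij, Pi.one_apply]

lemma Pel'_mul_Xel' (i : Fin n) : Pel' R m i * Xel' R m i = 0 :=
  Pel'_mul_Xel'_pre m i (by rw [← map_pow, pgen_pow_card]; exact map_one _)

/-- the coordinates of g·pᵢᵏ -/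
lemma mul_pgen_pow_apply_ne {i j : Fin n} (hij : j ≠ i) (g : Gr m) (k : ℕ) :
    (g * pgen m i ^ k) j = g j := by
  rw [Pi.mul_apply, pgen_pow_ne m hij, mul_one]

lemma mul_pgen_pow_apply_same (i : Fin n) (g : Gr m) (k : ℕ) :
    (g * pgen m i ^ k) i = g i * Multiplicative.ofAdd (k : ZMod (m i)) := by
  rw [Pi.mul_apply, pgen_pow_same]

open scoped Classical in
/-- component extraction along coordinate i -/
noncomputable def proj (i : Fin n) (k : ℕ) (f : MonoidAlgebra R (Gr m)) :
    MonoidAlgebra R (Gr m) :=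
  MonoidAlgebra.ofCoeff (Finsupp.filter (fun g : Gr m => g i = 1)
    (Finsupp.equivMapDomain (Equiv.mulRight ((pgen m i ^ k)⁻¹)) f.coeff))

lemma proj_apply (i : Fin n) (k : ℕ) (f : MonoidAlgebra R (Gr m)) (g : Gr m) :
    proj m i k f g = if g i = 1 then f (g * pgen m i ^ k) else 0 := by
  classical
  rw [proj]
  rw [MonoidAlgebra.coeff_ofCoeff, Finsupp.filter_apply, Finsupp.equivMapDomain_apply]
  simp only [Equiv.mulRight_symm, Equiv.coe_mulRight, inv_inv]


lemma proj_add (i : Fin n) (k : ℕ) (f h : MonoidAlgebra R (Gr m)) :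
    proj m i k (f + h) = proj m i k f + proj m i k h := by
  ext g
  have : (proj m i k f + proj m i k h) g = proj m i k f g + proj m i k h g := rfl
  rw [this, proj_apply, proj_apply, proj_apply]
  have h2 : (f + h) (g * pgen m i ^ k) = f (g * pgen m i ^ k) + h (g * pgen m i ^ k) := rfl
  split
  · rw [h2]
  · simp

lemma proj_zero (i : Fin n) (k : ℕ) : proj m i k (0 : MonoidAlgebra R (Gr m)) = 0 := by
  ext g
  rw [proj_apply]
  have : (0 : MonoidAlgebra R (Gr m)) (g * pgen m i ^ k) = 0 := rfl
  rw [this]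
  have h0 : (0 : MonoidAlgebra R (Gr m)) g = 0 := rfl
  rw [h0, ite_self]

lemma proj_sub (i : Fin n) (k : ℕ) (f h : MonoidAlgebra R (Gr m)) :
    proj m i k (f - h) = proj m i k f - proj m i k h := by
  ext g
  have : (proj m i k f - proj m i k h) g = proj m i k f g - proj m i k h g := rfl
  rw [this, proj_apply, proj_apply, proj_apply]
  have h2 : (f - h) (g * pgen m i ^ k) = f (g * pgen m i ^ k) - h (g * pgen m i ^ k) := rfl
  split
  · rw [h2]
  · simp

lemma proj_sum {α : Type} (s : Finset α) (F : α → MonoidAlgebra R (Gr m)) (i : Fin n) (k : ℕ) :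
    proj m i k (∑ x ∈ s, F x) = ∑ x ∈ s, proj m i k (F x) := by
  classical
  induction s using Finset.induction with
  | empty => simpa using proj_zero m i k
  | insert a s hne ih =>
      rw [Finset.sum_insert hne, Finset.sum_insert hne, proj_add, ih]

lemma proj_period (i : Fin n) (k : ℕ) (f : MonoidAlgebra R (Gr m)) :
    proj m i (k + m i) f = proj m i k f := by
  ext g
  rw [proj_apply, proj_apply, pow_add, pgen_pow_card, mul_one]

def TrivAt (i : Fin n) (f : MonoidAlgebra R (Gr m)) : Prop :=
  ∀ g : Gr m, f g ≠ 0 → g i = 1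

lemma trivat_proj (i : Fin n) (k : ℕ) (f : MonoidAlgebra R (Gr m)) :
    TrivAt m i (proj m i k f) := by
  intro g hg
  rw [proj_apply] at hg
  by_contra hcon
  rw [if_neg hcon] at hg
  exact hg rfl

lemma proj_eq_self (i : Fin n) (f : MonoidAlgebra R (Gr m)) (hf : TrivAt m i f) :
    proj m i 0 f = f := by
  ext g
  rw [proj_apply, pow_zero, mul_one]
  by_cases hg : g i = 1
  · rw [if_pos hg]
  · rw [if_neg hg]
    by_contra hcon
    exact hg (hf g (fun hc => hcon hc.symm))

lemma proj_mul_single (i : Fin n) (k : ℕ) (f : MonoidAlgebra R (Gr m)) {b : Gr m} (r : R)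
    (hb : b i = 1) :
    proj m i k (f * MonoidAlgebra.single b r) = proj m i k f * MonoidAlgebra.single b r := by
  ext g
  rw [proj_apply, MonoidAlgebra.mul_single_apply, MonoidAlgebra.mul_single_apply, proj_apply]
  have hcoord : (g * b⁻¹) i = g i := by
    rw [Pi.mul_apply, Pi.inv_apply, hb, inv_one, mul_one]
  rw [hcoord]
  have harg : g * b⁻¹ * pgen m i ^ k = g * pgen m i ^ k * b⁻¹ := mul_right_comm _ _ _
  rw [harg]
  split
  · rfl
  · rw [zero_mul]

lemma proj_mul_trivat (i : Fin n) (k : ℕ) (f h : MonoidAlgebra R (Gr m))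
    (hh : TrivAt m i h) :
    proj m i k (f * h) = proj m i k f * h := by
  classical
  have hdecomp : h = ∑ b ∈ h.coeff.support, MonoidAlgebra.single b (h b) := by
    exact (MonoidAlgebra.sum_coeff_single h).symm
  rw [hdecomp, Finset.mul_sum, proj_sum, Finset.mul_sum]
  apply Finset.sum_congr rfl
  intro b hbmem
  exact proj_mul_single m i k f (h b) (hh b (Finsupp.mem_support_iff.mp hbmem))

lemma proj_mul_of (i : Fin n) (k : ℕ) (f : MonoidAlgebra R (Gr m)) :
    proj m i k (f * MonoidAlgebra.of R (Gr m) (pgen m i)) = proj m i (k + (m i - 1)) f := by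
  ext g
  rw [proj_apply, proj_apply, MonoidAlgebra.of_apply, MonoidAlgebra.mul_single_apply]
  have hM : (1 : ℕ) ≤ m i := Nat.one_le_iff_ne_zero.mpr (NeZero.ne (m i))
  have hpow : pgen m i ^ (k + (m i - 1)) * pgen m i = pgen m i ^ k := by
    rw [← pow_succ]
    have he : k + (m i - 1) + 1 = k + m i := by omega
    rw [he, pow_add, pgen_pow_card, mul_one]
  have harg : g * pgen m i ^ k * (pgen m i)⁻¹ = g * pgen m i ^ (k + (m i - 1)) := by
    rw [← hpow]; group
  rw [harg]
  split
  · rw [mul_one]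
  · rfl

lemma of_pow_eq (i : Fin n) (k : ℕ) :
    (MonoidAlgebra.of R (Gr m) (pgen m i)) ^ k = MonoidAlgebra.single (pgen m i ^ k) (1 : R) := by
  rw [← map_pow, MonoidAlgebra.of_apply]

lemma sum_of_pow_mul_apply (i : Fin n) (V : ℕ → MonoidAlgebra R (Gr m)) (g : Gr m) :
    (∑ k ∈ Finset.range (m i), (MonoidAlgebra.of R (Gr m) (pgen m i)) ^ k * V k) g
      = ∑ k ∈ Finset.range (m i), (V k) ((pgen m i ^ k)⁻¹ * g) := by
  rw [MonoidAlgebra.coeff_sum, Finsupp.finset_sum_apply]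
  apply Finset.sum_congr rfl
  intro k _
  rw [of_pow_eq, MonoidAlgebra.single_mul_apply, one_mul]

lemma proj_reconstruct (i : Fin n) (f : MonoidAlgebra R (Gr m)) :
    f = ∑ k ∈ Finset.range (m i), (MonoidAlgebra.of R (Gr m) (pgen m i)) ^ k * proj m i k f := by
  ext g
  rw [sum_of_pow_mul_apply]
  have hterm : ∀ k ∈ Finset.range (m i),
      proj m i k f ((pgen m i ^ k)⁻¹ * g)
        = if Multiplicative.toAdd (g i) = (k : ZMod (m i)) then f g else 0 := by
    intro k _
    rw [proj_apply]
    have hcoord : ((pgen m i ^ k)⁻¹ * g) i = (Multiplicative.ofAdd ((k : ZMod (m i))))⁻¹ * g i := by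
      rw [Pi.mul_apply, Pi.inv_apply, pgen_pow_same]
    have harg : (pgen m i ^ k)⁻¹ * g * pgen m i ^ k = g := by
      rw [mul_right_comm, inv_mul_cancel, one_mul]
    rw [hcoord, harg]
    congr 1
    rw [eq_iff_iff]
    constructor
    · intro hcond
      have := congrArg Multiplicative.toAdd (inv_mul_eq_one.mp hcond)
      simpa using this.symm
    · intro hcond
      rw [inv_mul_eq_one]
      have := congrArg Multiplicative.ofAdd hcond
      simpa using this.symm
  rw [Finset.sum_congr rfl hterm]
  rw [Finset.sum_eq_single_of_mem ((Multiplicative.toAdd (g i)).val)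
      (Finset.mem_range.mpr (ZMod.val_lt _))]
  · rw [if_pos (ZMod.natCast_rightInverse _).symm]
  · intro b hb hne
    rw [if_neg]
    intro hc
    exact hne ((zmod_eq_cast_iff (m i) _ _ (Finset.mem_range.mp hb)).mp hc)

lemma trivat_single (i : Fin n) {b : Gr m} (hb : b i = 1) (r : R) :
    TrivAt m i (MonoidAlgebra.single b r) := by
  intro g hg
  have : g = b := by
    by_contra hc
    rw [MonoidAlgebra.coeff_single, Finsupp.single_apply, if_neg (fun h => hc h.symm)] at hg
    exact hg rfl
  rw [this, hb]

lemma trivat_zero (i : Fin n) : TrivAt m i (0 : MonoidAlgebra R (Gr m)) := by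
  intro g hg; exact absurd rfl hg

lemma trivat_add (i : Fin n) {f h : MonoidAlgebra R (Gr m)}
    (hf : TrivAt m i f) (hh : TrivAt m i h) : TrivAt m i (f + h) := by
  intro g hg
  have : f g + h g ≠ 0 := hg
  by_cases h1 : f g = 0
  · exact hh g (by rw [h1, zero_add] at this; exact this)
  · exact hf g h1

lemma trivat_sub (i : Fin n) {f h : MonoidAlgebra R (Gr m)}
    (hf : TrivAt m i f) (hh : TrivAt m i h) : TrivAt m i (f - h) := by
  intro g hg
  have : f g - h g ≠ 0 := hg
  by_cases h1 : f g = 0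
  · exact hh g (by intro hc; rw [h1, hc, sub_zero] at this; exact this rfl)
  · exact hf g h1

lemma trivat_sum {α : Type} (i : Fin n) (s : Finset α) (F : α → MonoidAlgebra R (Gr m))
    (hF : ∀ x ∈ s, TrivAt m i (F x)) : TrivAt m i (∑ x ∈ s, F x) := by
  classical
  induction s using Finset.induction with
  | empty => simpa using trivat_zero m i
  | insert a s hne ih =>
      rw [Finset.sum_insert hne]
      exact trivat_add m i (hF a (Finset.mem_insert_self a s))
        (ih (fun x hx => hF x (Finset.mem_insert_of_mem hx)))

lemma trivat_mul (i : Fin n) {f h : MonoidAlgebra R (Gr m)}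
    (hf : TrivAt m i f) (hh : TrivAt m i h) : TrivAt m i (f * h) := by
  classical
  intro g hg
  have hmem : g ∈ (f * h).coeff.support := Finsupp.mem_support_iff.mpr hg
  have := MonoidAlgebra.support_coeff_mul_subset f h hmem
  rw [Finset.mem_mul] at this
  obtain ⟨a, ha, b, hb, hab⟩ := this
  have h1 : a i = 1 := hf a (Finsupp.mem_support_iff.mp ha)
  have h2 : b i = 1 := hh b (Finsupp.mem_support_iff.mp hb)
  rw [← hab, Pi.mul_apply, h1, h2, mul_one]

lemma trivat_one (i : Fin n) : TrivAt m i (1 : MonoidAlgebra R (Gr m)) :=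
  trivat_single m i (by rw [Pi.one_apply]) 1

lemma trivat_of_pow {i j : Fin n} (hij : j ≠ i) (k : ℕ) :
    TrivAt m i ((MonoidAlgebra.of R (Gr m) (pgen m j)) ^ k) := by
  rw [of_pow_eq]
  exact trivat_single m i (pgen_pow_ne m (Ne.symm hij) k) 1

lemma trivat_X {i j : Fin n} (hij : j ≠ i) : TrivAt m i (Xel' R m j) :=
  trivat_sub m i (trivat_one m i) (by simpa [of_pow_eq, pow_one] using trivat_of_pow m hij 1)

lemma trivat_P {i j : Fin n} (hij : j ≠ i) : TrivAt m i (Pel' R m j) :=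
  trivat_sum m i _ _ (fun k _ => trivat_of_pow m hij k)

/-- F2 : P_i kills only zero among i-trivial elements -/
lemma trivat_P_mul_eq_zero {i : Fin n} {c : MonoidAlgebra R (Gr m)}
    (hc : TrivAt m i c) (hz : Pel' R m i * c = 0) : c = 0 := by
  ext h
  by_cases hh : h i = 1
  · have happ : (Pel' R m i * c) h = 0 := by rw [hz]; rfl
    rw [Pel', Finset.sum_mul] at happ
    have hsum : ∀ k ∈ Finset.range (m i),
        ((MonoidAlgebra.of R (Gr m) (pgen m i)) ^ k * c) h
          = if (0 : ZMod (m i)) = (k : ZMod (m i)) then c h else 0 := by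
      intro k hk
      rw [of_pow_eq, MonoidAlgebra.single_mul_apply, one_mul]
      by_cases hcond : (0 : ZMod (m i)) = (k : ZMod (m i))
      · rw [if_pos hcond]
        have : pgen m i ^ k = 1 := by
          have hk0 : k = 0 := by
            have := (zmod_eq_cast_iff (m i) 0 k (Finset.mem_range.mp hk)).mp hcond
            simpa [ZMod.val_zero] using this
          rw [hk0, pow_zero]
        rw [this, inv_one, one_mul]
      · rw [if_neg hcond]
        by_contra hne
        have hco : ((pgen m i ^ k)⁻¹ * h) i = 1 := hc _ hne
        rw [Pi.mul_apply, Pi.inv_apply, pgen_pow_same, hh, mul_one, inv_eq_one] at hco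
        exact hcond (by
          have := congrArg Multiplicative.toAdd hco
          simpa using this.symm)
    rw [MonoidAlgebra.coeff_sum, Finsupp.finset_sum_apply, Finset.sum_congr rfl hsum,
      Finset.sum_eq_single_of_mem 0 (Finset.mem_range.mpr (Nat.pos_of_ne_zero (NeZero.ne (m i))))] at happ
    · rw [if_pos (by norm_num)] at happ
      rw [happ]; rfl
    · intro b hb hne
      rw [if_neg]
      intro hcond
      apply hne
      have := (zmod_eq_cast_iff (m i) 0 b (Finset.mem_range.mp hb)).mp hcond
      simpa [ZMod.val_zero] using this
  · have : c h = 0 := by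
      by_contra hne
      exact hh (hc h hne)
    rw [this]; rfl

/-- F1 : annihilator of X_i -/
lemma ann_X {i : Fin n} {f : MonoidAlgebra R (Gr m)} (hf : f * Xel' R m i = 0) :
    f = Pel' R m i * proj m i 0 f := by
  have hmul : f * MonoidAlgebra.of R (Gr m) (pgen m i) = f := by
    have : f * (1 - MonoidAlgebra.of R (Gr m) (pgen m i)) = 0 := hf
    have h2 : f - f * MonoidAlgebra.of R (Gr m) (pgen m i) = 0 := by
      rw [← this]; ring
    linear_combination -h2
  have hconst : ∀ k : ℕ, proj m i k f = proj m i 0 f := by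
    intro k
    induction k with
    | zero => rfl
    | succ k ih =>
        have : proj m i (k + 1) (f * MonoidAlgebra.of R (Gr m) (pgen m i)) = proj m i k f := by
          rw [proj_mul_of]
          have he : k + 1 + (m i - 1) = k + m i := by
            have hM : (1 : ℕ) ≤ m i := Nat.one_le_iff_ne_zero.mpr (NeZero.ne (m i))
            omega
          rw [he, proj_period]
        rw [hmul] at this
        rw [this, ih]
  calc f = ∑ k ∈ Finset.range (m i), (MonoidAlgebra.of R (Gr m) (pgen m i)) ^ k * proj m i k f :=
        proj_reconstruct m i f
    _ = ∑ k ∈ Finset.range (m i), (MonoidAlgebra.of R (Gr m) (pgen m i)) ^ k * proj m i 0 f := by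
        apply Finset.sum_congr rfl; intro k _; rw [hconst k]
    _ = Pel' R m i * proj m i 0 f := by rw [Pel', Finset.sum_mul]

/-- Lemma B -/
lemma lemB (S : Finset (Fin n)) (f : MonoidAlgebra R (Gr m))
    (hf : ∀ i ∈ S, f * Xel' R m i = 0) :
    ∃ a, f = (∏ j ∈ S, Pel' R m j) * a := by
  classical
  induction S using Finset.induction generalizing f with
  | empty => exact ⟨f, by rw [Finset.prod_empty, one_mul]⟩
  | @insert i₀ S hi₀ ih =>
      have h1 : f = Pel' R m i₀ * proj m i₀ 0 f :=
        ann_X m (hf i₀ (Finset.mem_insert_self i₀ S))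
      set c := proj m i₀ 0 f with hc
      have htriv : TrivAt m i₀ c := trivat_proj m i₀ 0 f
      have hcX : ∀ i ∈ S, c * Xel' R m i = 0 := by
        intro i hi
        have hXz : f * Xel' R m i = 0 := hf i (Finset.mem_insert_of_mem hi)
        rw [h1, mul_assoc] at hXz
        exact trivat_P_mul_eq_zero m
          (trivat_mul m i₀ htriv (trivat_X m (fun h => hi₀ (h ▸ hi)))) hXz
      obtain ⟨a, ha⟩ := ih c hcX
      refine ⟨a, ?_⟩
      rw [h1, ha, Finset.prod_insert hi₀, mul_assoc]

def Ind (S : Finset (Fin n)) (f : MonoidAlgebra R (Gr m)) : Prop :=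
  ∀ j, j ∉ S → TrivAt m j f

lemma ind_mono {S T : Finset (Fin n)} (hST : S ⊆ T) {f : MonoidAlgebra R (Gr m)}
    (hf : Ind m S f) : Ind m T f :=
  fun j hj => hf j (fun hc => hj (hST hc))

lemma ind_zero (S : Finset (Fin n)) : Ind m S (0 : MonoidAlgebra R (Gr m)) :=
  fun j _ => trivat_zero m j

lemma ind_add {S : Finset (Fin n)} {f h : MonoidAlgebra R (Gr m)}
    (hf : Ind m S f) (hh : Ind m S h) : Ind m S (f + h) :=
  fun j hj => trivat_add m j (hf j hj) (hh j hj)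

lemma ind_mul {S : Finset (Fin n)} {f h : MonoidAlgebra R (Gr m)}
    (hf : Ind m S f) (hh : Ind m S h) : Ind m S (f * h) :=
  fun j hj => trivat_mul m j (hf j hj) (hh j hj)

lemma ind_sum {α : Type} {S : Finset (Fin n)} (s : Finset α)
    (F : α → MonoidAlgebra R (Gr m)) (hF : ∀ x ∈ s, Ind m S (F x)) :
    Ind m S (∑ x ∈ s, F x) :=
  fun j hj => trivat_sum m j s F (fun x hx => hF x hx j hj)

lemma trivat_proj_ne {i₀ j : Fin n} (hj : j ≠ i₀) (k : ℕ) {f : MonoidAlgebra R (Gr m)}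
    (hf : TrivAt m j f) : TrivAt m j (proj m i₀ k f) := by
  intro g hg
  rw [proj_apply] at hg
  by_cases hcond : g i₀ = 1
  · rw [if_pos hcond] at hg
    have := hf _ hg
    rwa [mul_pgen_pow_apply_ne m hj] at this
  · rw [if_neg hcond] at hg
    exact absurd rfl hg

lemma ind_proj_insert {i₀ : Fin n} {S : Finset (Fin n)} (k : ℕ) {f : MonoidAlgebra R (Gr m)}
    (hf : Ind m (insert i₀ S) f) : Ind m S (proj m i₀ k f) := by
  intro j hj
  by_cases hji : j = i₀
  · subst hji
    exact trivat_proj m j k f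
  · exact trivat_proj_ne m hji k
      (hf j (fun hc => (Finset.mem_insert.mp hc).elim hji hj))

lemma ind_of_pow {S : Finset (Fin n)} {i : Fin n} (hi : i ∈ S) (k : ℕ) :
    Ind m S ((MonoidAlgebra.of R (Gr m) (pgen m i)) ^ k) :=
  fun j hj => trivat_of_pow m (fun h => hj (by rw [← h]; exact hi)) k

lemma ind_P {S : Finset (Fin n)} {i : Fin n} (hi : i ∈ S) : Ind m S (Pel' R m i) :=
  fun j hj => trivat_P m (fun h => hj (by rw [← h]; exact hi))

/-- Main structure lemma for the kernel -/
lemma lemA (S : Finset (Fin n)) (v : Fin n → MonoidAlgebra R (Gr m))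
    (hInd : ∀ i ∈ S, Ind m S (v i))
    (hRel : ∀ i ∈ S, ∀ j ∈ S, v i * Xel' R m j = v j * Xel' R m i) :
    ∃ (t : MonoidAlgebra R (Gr m)) (a : Fin n → MonoidAlgebra R (Gr m)),
      Ind m S t ∧ ∀ i ∈ S, v i = t * Xel' R m i + a i * ∏ j ∈ S.erase i, Pel' R m j := by
  classical
  induction S using Finset.induction generalizing v with
  | empty =>
      exact ⟨0, fun _ => 0, ind_zero m ∅, fun i hi => absurd hi (Finset.notMem_empty i)⟩
  | @insert i₀ S hi₀ ih =>
      set M := m i₀ with hM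
      have hM1 : 1 ≤ M := Nat.one_le_iff_ne_zero.mpr (NeZero.ne (m i₀))
      set A : ℕ → MonoidAlgebra R (Gr m) := fun k => proj m i₀ k (v i₀) with hA
      set B : ℕ → MonoidAlgebra R (Gr m) := fun k => ∑ l ∈ Finset.Icc 1 k, A l with hB
      have hB0 : B 0 = 0 := by rw [hB]; simp
      have hBsucc : ∀ k, B (k + 1) = B k + A (k + 1) := by
        intro k
        rw [hB]
        exact Finset.sum_Icc_succ_top (by omega) A
      have hAM : A M = A 0 := by
        rw [hA]
        have := proj_period m i₀ 0 (v i₀)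
        rwa [zero_add] at this
      -- the basic recursion
      have hrec : ∀ i ∈ S, ∀ k, proj m i₀ (k + 1) (v i)
          = proj m i₀ k (v i) + A (k + 1) * Xel' R m i := by
        intro i hi k
        have hne : i ≠ i₀ := fun h => hi₀ (h ▸ hi)
        have hrel : v i * Xel' R m i₀ = v i₀ * Xel' R m i :=
          hRel i (Finset.mem_insert_of_mem hi) i₀ (Finset.mem_insert_self i₀ S)
        have hL := congrArg (proj m i₀ (k + 1)) hrel
        have hXdef : v i * Xel' R m i₀
            = v i - v i * MonoidAlgebra.of R (Gr m) (pgen m i₀) := by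
          rw [Xel']; ring
        rw [hXdef, proj_sub, proj_mul_of] at hL
        have he : k + 1 + (M - 1) = k + M := by omega
        rw [he, proj_period] at hL
        rw [proj_mul_trivat m i₀ (k + 1) (v i₀) (Xel' R m i) (trivat_X m hne)] at hL
        have : proj m i₀ (k + 1) (v i) - proj m i₀ k (v i) = A (k + 1) * Xel' R m i := hL
        linear_combination this
      -- iterate
      have hiter : ∀ i ∈ S, ∀ k, proj m i₀ k (v i)
          = proj m i₀ 0 (v i) + B k * Xel' R m i := by
        intro i hi k
        induction k with
        | zero => rw [hB0, zero_mul, add_zero]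
        | succ k ihk =>
            rw [hrec i hi k, ihk, hBsucc]
            ring
      -- the annihilation
      have hann : ∀ i ∈ S, B M * Xel' R m i = 0 := by
        intro i hi
        have h1 := hiter i hi M
        have h2 : proj m i₀ M (v i) = proj m i₀ 0 (v i) := by
          have := proj_period m i₀ 0 (v i)
          rwa [zero_add] at this
        rw [h2] at h1
        linear_combination -h1
      obtain ⟨b, hb⟩ := lemB m S (B M) hann
      -- w
      set w : MonoidAlgebra R (Gr m) :=
        ∑ k ∈ Finset.range M, (MonoidAlgebra.of R (Gr m) (pgen m i₀)) ^ k * B k with hw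
      -- reconstruction for i ∈ S
      have hreconS : ∀ i ∈ S, v i = Pel' R m i₀ * proj m i₀ 0 (v i) + w * Xel' R m i := by
        intro i hi
        calc v i = ∑ k ∈ Finset.range M,
              (MonoidAlgebra.of R (Gr m) (pgen m i₀)) ^ k * proj m i₀ k (v i) :=
            proj_reconstruct m i₀ (v i)
          _ = ∑ k ∈ Finset.range M, ((MonoidAlgebra.of R (Gr m) (pgen m i₀)) ^ k * proj m i₀ 0 (v i)
                + (MonoidAlgebra.of R (Gr m) (pgen m i₀)) ^ k * B k * Xel' R m i) := by
              apply Finset.sum_congr rfl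
              intro k _
              rw [hiter i hi k]
              ring
          _ = Pel' R m i₀ * proj m i₀ 0 (v i) + w * Xel' R m i := by
              rw [Finset.sum_add_distrib, Pel', Finset.sum_mul, Finset.sum_mul]
      -- reconstruction for i₀
      have hrecon0 : v i₀ = w * Xel' R m i₀ + B M := by
        set q : MonoidAlgebra R (Gr m) := MonoidAlgebra.of R (Gr m) (pgen m i₀) with hq
        have hqM : q ^ M = 1 := by
          rw [hq, ← map_pow, pgen_pow_card]
          exact map_one _
        set T := M - 1 with hT
        have hMT : M = T + 1 := by omega
        have hv0 : v i₀ = ∑ k ∈ Finset.range M, q ^ k * A k := proj_reconstruct m i₀ (v i₀)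
        have hv0' : v i₀ = A 0 + ∑ k ∈ Finset.range T, q ^ (k + 1) * A (k + 1) := by
          rw [hv0, hMT, Finset.sum_range_succ']
          rw [pow_zero, one_mul]
          ring
        have hw1 : w = B 0 + ∑ k ∈ Finset.range T, q ^ (k + 1) * B (k + 1) := by
          rw [hw, hMT, Finset.sum_range_succ', pow_zero, one_mul]
          ring
        have hw2 : w * q = B T + ∑ k ∈ Finset.range T, q ^ (k + 1) * B k := by
          rw [hw, Finset.sum_mul]
          have hcg : ∀ k ∈ Finset.range M, q ^ k * B k * q = q ^ (k + 1) * B k := by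
            intro k _; ring
          rw [Finset.sum_congr rfl hcg, hMT, Finset.sum_range_succ, ← hMT, hqM, one_mul]
          ring
        have hXw : w * Xel' R m i₀ = w - w * q := by
          rw [Xel', hq]; ring
        have hBM' : B M = B T + A M := by
          rw [hMT, hBsucc, ← hMT]
        have hsplit : ∑ k ∈ Finset.range T, q ^ (k + 1) * B (k + 1)
            - ∑ k ∈ Finset.range T, q ^ (k + 1) * B k
            = ∑ k ∈ Finset.range T, q ^ (k + 1) * A (k + 1) := by
          rw [← Finset.sum_sub_distrib]
          apply Finset.sum_congr rfl
          intro k _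
          rw [hBsucc]
          ring
        linear_combination hv0' - hXw - hw1 + hw2 - hBM' - hAM - hsplit - hB0
      -- apply IH
      have hInd' : ∀ i ∈ S, Ind m S (proj m i₀ 0 (v i)) := by
        intro i hi
        exact ind_proj_insert m 0 (hInd i (Finset.mem_insert_of_mem hi))
      have hRel' : ∀ i ∈ S, ∀ j ∈ S, proj m i₀ 0 (v i) * Xel' R m j
          = proj m i₀ 0 (v j) * Xel' R m i := by
        intro i hi j hj
        have h1 := congrArg (proj m i₀ 0)
          (hRel i (Finset.mem_insert_of_mem hi) j (Finset.mem_insert_of_mem hj))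
        rwa [proj_mul_trivat m i₀ 0 (v i) _ (trivat_X m (fun h => hi₀ (h ▸ hj))),
          proj_mul_trivat m i₀ 0 (v j) _ (trivat_X m (fun h => hi₀ (h ▸ hi)))] at h1
      obtain ⟨t', a', ht', ha'⟩ := ih (fun i => proj m i₀ 0 (v i)) hInd' hRel'
      -- assemble
      refine ⟨Pel' R m i₀ * t' + w, Function.update a' i₀ b, ?_, ?_⟩
      · apply ind_add
        · exact ind_mul m (ind_P m (Finset.mem_insert_self i₀ S))
            (ind_mono m (Finset.subset_insert i₀ S) ht')
        · apply ind_sum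
          intro k _
          apply ind_mul m (ind_of_pow m (Finset.mem_insert_self i₀ S) k)
          rw [hB]
          apply ind_sum
          intro l _
          rw [hA]
          exact ind_mono m (Finset.subset_insert i₀ S)
            (ind_proj_insert m l (hInd i₀ (Finset.mem_insert_self i₀ S)))
      · intro i hi
        rcases Finset.mem_insert.mp hi with hii | hiS
        · subst hii
          rw [Function.update_self]
          rw [Finset.erase_insert hi₀]
          have hPX : Pel' R m i * Xel' R m i = 0 := Pel'_mul_Xel' m i
          linear_combination hrecon0 + hb - t' * hPX
        · have hne : i ≠ i₀ := fun h => hi₀ (by rw [← h]; exact hiS)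
          rw [Function.update_of_ne hne]
          rw [Finset.erase_insert_of_ne hne.symm, Finset.prod_insert
            (fun hc => hi₀ (Finset.mem_of_mem_erase hc))]
          linear_combination hreconS i hiS + Pel' R m i₀ * (ha' i hiS)

end Dev


section Maps
variable (G : Type) [CommGroup G]

lemma toQ_single (g : G) (k : ℤ) :
    toQ G (MonoidAlgebra.single g k) = MonoidAlgebra.single g (k : ℚ) := by
  classical
  rw [toQ, MonoidAlgebra.lift_single]
  rw [MonoidAlgebra.of_apply]
  ext g'
  rw [MonoidAlgebra.coeff_smul_apply]
  rw [MonoidAlgebra.coeff_single, MonoidAlgebra.coeff_single, Finsupp.single_apply, Finsupp.single_apply]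
  split <;> simp

lemma toQ_of (g : G) : toQ G (MonoidAlgebra.of ℤ G g) = MonoidAlgebra.of ℚ G g := by
  simpa using toQ_single G g 1

lemma toQ_apply (z : ZG G) (g : G) : toQ G z g = ((z g : ℤ) : ℚ) := by
  induction z using MonoidAlgebra.induction_linear with
  | zero => rw [map_zero]; simp
  | add f h hf hh =>
      rw [map_add]
      have h1 : (toQ G f + toQ G h) g = toQ G f g + toQ G h g := rfl
      have h2 : ((f + h : ZG G)) g = f g + h g := rfl
      rw [h1, h2, hf, hh]
      push_cast
      ring
  | single a b =>
      classical
      rw [toQ_single]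
      rw [MonoidAlgebra.coeff_single, MonoidAlgebra.coeff_single, Finsupp.single_apply, Finsupp.single_apply]
      split <;> simp

lemma toQ_inj : Function.Injective (toQ G) := by
  intro x y hxy
  ext g
  have := congrArg (fun f : QG G => f g) hxy
  simp only [toQ_apply] at this
  exact_mod_cast this

lemma memZG_of_int (x : QG G) (hx : ∀ g : G, ∃ k : ℤ, x g = (k : ℚ)) : MemZG G x := by
  refine ⟨MonoidAlgebra.ofCoeff (Finsupp.mapRange Rat.num (by simp) x.coeff), ?_⟩
  ext g
  rw [toQ_apply, MonoidAlgebra.coeff_ofCoeff]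
  show (((x.coeff g).num : ℤ) : ℚ) = x.coeff g
  obtain ⟨k, hk⟩ := hx g
  rw [hk, Rat.num_intCast]

noncomputable def rho (D : ℕ) : ZG G →+* MonoidAlgebra (ZMod D) G :=
  MonoidAlgebra.liftNCRingHom
    (MonoidAlgebra.singleOneRingHom.comp (Int.castRingHom (ZMod D)))
    (MonoidAlgebra.of (ZMod D) G) (fun _ _ => Commute.all _ _)

lemma rho_single (D : ℕ) (g : G) (k : ℤ) :
    rho G D (MonoidAlgebra.single g k) = MonoidAlgebra.single g ((k : ℤ) : ZMod D) := by
  have h1 : rho G D (MonoidAlgebra.single g k)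
      = (MonoidAlgebra.singleOneRingHom.comp (Int.castRingHom (ZMod D))) k
        * MonoidAlgebra.of (ZMod D) G g := MonoidAlgebra.liftNC_single _ _ _ _
  rw [h1]
  have h2 : (MonoidAlgebra.singleOneRingHom.comp (Int.castRingHom (ZMod D))) k
      = MonoidAlgebra.single (1 : G) ((k : ℤ) : ZMod D) := rfl
  rw [h2, MonoidAlgebra.of_apply, MonoidAlgebra.single_mul_single, one_mul, mul_one]

lemma rho_of (D : ℕ) (g : G) :
    rho G D (MonoidAlgebra.of ℤ G g) = MonoidAlgebra.of (ZMod D) G g := by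
  have := rho_single G D g 1
  rw [MonoidAlgebra.of_apply, MonoidAlgebra.of_apply, this]
  norm_num

lemma rho_apply (D : ℕ) (z : ZG G) (g : G) : rho G D z g = ((z g : ℤ) : ZMod D) := by
  induction z using MonoidAlgebra.induction_linear with
  | zero => rw [map_zero]; simp
  | add f h hf hh =>
      rw [map_add]
      have h1 : (rho G D f + rho G D h) g = rho G D f g + rho G D h g := rfl
      have h2 : ((f + h : ZG G)) g = f g + h g := rfl
      rw [h1, h2, hf, hh]
      push_cast
      ring
  | single a b =>
      classical
      rw [rho_single]
      rw [MonoidAlgebra.coeff_single, MonoidAlgebra.coeff_single, Finsupp.single_apply, Finsupp.single_apply]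
      split <;> simp

lemma rho_surj (D : ℕ) [NeZero D] (x : MonoidAlgebra (ZMod D) G) : ∃ z : ZG G, rho G D z = x := by
  refine ⟨MonoidAlgebra.ofCoeff (Finsupp.mapRange (fun c : ZMod D => (c.val : ℤ)) (by simp) x.coeff), ?_⟩
  ext g
  rw [rho_apply, MonoidAlgebra.coeff_ofCoeff, Finsupp.mapRange_apply]
  push_cast
  exact ZMod.natCast_rightInverse (x g)

lemma rho_ker (D : ℕ) [NeZero D] (z : ZG G) (hz : rho G D z = 0) :
    ∃ y : ZG G, z = (D : ℤ) • y := by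
  have hdvd : ∀ g : G, (D : ℤ) ∣ z g := by
    intro g
    have := congrArg (fun f : MonoidAlgebra (ZMod D) G => f g) hz
    simp only [rho_apply] at this
    have h0 : ((z g : ℤ) : ZMod D) = 0 := this
    exact (ZMod.intCast_zmod_eq_zero_iff_dvd _ _).mp h0
  refine ⟨MonoidAlgebra.ofCoeff (Finsupp.mapRange (fun t : ℤ => t / (D : ℤ)) (by simp) z.coeff), ?_⟩
  ext g
  rw [MonoidAlgebra.coeff_smul_apply, MonoidAlgebra.coeff_ofCoeff, Finsupp.mapRange_apply, smul_eq_mul]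
  exact (Int.mul_ediv_cancel' (hdvd g)).symm

end Maps

section Maps2
variable {n : ℕ} (m : Fin n → ℕ) [∀ i, NeZero (m i)]

lemma toQ_X (i : Fin n) : toQ (Gr m) (Xel' ℤ m i) = Xel' ℚ m i := by
  rw [Xel', Xel', map_sub, map_one, toQ_of]

lemma toQ_P (i : Fin n) : toQ (Gr m) (Pel' ℤ m i) = Pel' ℚ m i := by
  rw [Pel', Pel', map_sum]
  apply Finset.sum_congr rfl
  intro k _
  rw [map_pow, toQ_of]

lemma rho_X (D : ℕ) (i : Fin n) : rho (Gr m) D (Xel' ℤ m i) = Xel' (ZMod D) m i := by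
  rw [Xel', Xel', map_sub, map_one, rho_of]

lemma rho_P (D : ℕ) (i : Fin n) : rho (Gr m) D (Pel' ℤ m i) = Pel' (ZMod D) m i := by
  rw [Pel', Pel', map_sum]
  apply Finset.sum_congr rfl
  intro k _
  rw [map_pow, rho_of]

end Maps2


/-- Lemma 2.4 (adjust): if r₁, …, rₙ ∈ ℚ[G] satisfy
rᵢ(e − pⱼ) − rⱼ(e − pᵢ) ∈ ℤ[G] for all i, j, then there exist u₁, …, uₙ ∈ ℤ[G] with
(rᵢ − uᵢ)(e − pⱼ) = (rⱼ − uⱼ)(e − pᵢ) for all i, j. -/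
theorem statement7
    (n : ℕ) (hn : 1 ≤ n) (m : Fin n → ℕ) [∀ i, NeZero (m i)]
    (r : Fin n → QG (Gr m))
    (h : ∀ i j, MemZG (Gr m)
      (r i * (1 - MonoidAlgebra.of ℚ (Gr m) (pgen m j))
        - r j * (1 - MonoidAlgebra.of ℚ (Gr m) (pgen m i)))) :
    ∃ u : Fin n → ZG (Gr m), ∀ i j,
      (r i - toQ (Gr m) (u i)) * (1 - MonoidAlgebra.of ℚ (Gr m) (pgen m j))
        = (r j - toQ (Gr m) (u j)) * (1 - MonoidAlgebra.of ℚ (Gr m) (pgen m i)) := by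
  classical
  set D : ℕ := ∏ j : Fin n, ∏ g ∈ (r j).coeff.support, (r j g).den with hDdef
  have hD0 : D ≠ 0 := by
    rw [hDdef]
    rw [Finset.prod_ne_zero_iff]
    intro j _
    rw [Finset.prod_ne_zero_iff]
    intro g _
    exact (r j g).den_nz
  haveI : NeZero D := ⟨hD0⟩
  have hdvd : ∀ j g, ((r j g).den) ∣ D := by
    intro j g
    by_cases hg : g ∈ (r j).coeff.support
    · calc (r j g).den ∣ ∏ g' ∈ (r j).coeff.support, (r j g').den :=
          Finset.dvd_prod_of_mem _ hg
        _ ∣ D := by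
          rw [hDdef]
          exact Finset.dvd_prod_of_mem _ (Finset.mem_univ j)
    · rw [Finsupp.notMem_support_iff.mp hg]
      simp
  have hint : ∀ j g, ∃ k : ℤ, (D : ℚ) * (r j g) = (k : ℚ) := by
    intro j g
    obtain ⟨c, hc⟩ := hdvd j g
    refine ⟨(c : ℤ) * (r j g).num, ?_⟩
    have hden : ((r j g).den : ℚ) ≠ 0 := by
      exact_mod_cast (r j g).den_nz
    have hq : ((r j g).den : ℚ) * (r j g) = ((r j g).num : ℚ) := by
      rw [mul_comm]
      exact_mod_cast Rat.mul_den_eq_num (r j g)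
    rw [hc]
    push_cast
    rw [mul_comm ((r j g).den : ℚ) (c : ℚ), mul_assoc, hq]
  have hzex : ∀ j, ∃ zz : ZG (Gr m), toQ (Gr m) zz = (D : ℚ) • r j := by
    intro j
    apply memZG_of_int
    intro g
    have h1 : ((D : ℚ) • r j) g = (D : ℚ) * (r j g) := by
      rw [MonoidAlgebra.coeff_smul_apply, smul_eq_mul]
    rw [h1]
    exact hint j g
  choose z hzeq using hzex
  -- relation modulo D
  have relmod : ∀ i j, rho (Gr m) D (z i) * Xel' (ZMod D) m j
      = rho (Gr m) D (z j) * Xel' (ZMod D) m i := by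
    intro i j
    obtain ⟨y, hy⟩ := h i j
    have hy' : toQ (Gr m) y = r i * Xel' ℚ m j - r j * Xel' ℚ m i := hy
    have hZeq : z i * Xel' ℤ m j - z j * Xel' ℤ m i = (D : ℤ) • y := by
      apply toQ_inj
      rw [map_sub, map_mul, map_mul, toQ_X, toQ_X, hzeq i, hzeq j, map_zsmul, hy']
      rw [← Int.cast_smul_eq_zsmul ℚ (D : ℤ) (r i * Xel' ℚ m j - r j * Xel' ℚ m i)]
      push_cast
      rw [smul_sub, smul_mul_assoc, smul_mul_assoc]
    have h2 := congrArg (rho (Gr m) D) hZeq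
    rw [map_sub, map_mul, map_mul, rho_X, rho_X, map_zsmul] at h2
    have h3 : (D : ℤ) • rho (Gr m) D y = 0 := by
      rw [natCast_zsmul, ← Nat.cast_smul_eq_nsmul (ZMod D), ZMod.natCast_self, zero_smul]
    rw [h3] at h2
    linear_combination h2
  -- apply the structure lemma
  obtain ⟨tb, ab, _, hab⟩ := lemA m Finset.univ (fun i => rho (Gr m) D (z i))
    (fun i _ j hj => absurd (Finset.mem_univ j) hj)
    (fun i _ j _ => relmod i j)
  obtain ⟨t, ht⟩ := rho_surj (Gr m) D tb
  choose c hc using fun i => rho_surj (Gr m) D (ab i)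
  have hker : ∀ i, ∃ yw : ZG (Gr m),
      z i - (t * Xel' ℤ m i + c i * ∏ j ∈ Finset.univ.erase i, Pel' ℤ m j)
        = (D : ℤ) • yw := by
    intro i
    apply rho_ker
    rw [map_sub, map_add, map_mul, map_mul, ht, hc, rho_X, map_prod]
    have hprod : (∏ j ∈ Finset.univ.erase i, rho (Gr m) D (Pel' ℤ m j))
        = ∏ j ∈ Finset.univ.erase i, Pel' (ZMod D) m j :=
      Finset.prod_congr rfl (fun j _ => rho_P m D j)
    rw [hprod, hab i (Finset.mem_univ i)]
    ring
  choose w hw using hker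
  refine ⟨w, ?_⟩
  have key : ∀ i, (D : ℚ) • (r i - toQ (Gr m) (w i))
      = toQ (Gr m) t * Xel' ℚ m i
        + toQ (Gr m) (c i) * ∏ j ∈ Finset.univ.erase i, Pel' ℚ m j := by
    intro i
    have h2 := congrArg (toQ (Gr m)) (hw i)
    rw [map_sub, map_add, map_mul, map_mul, toQ_X, map_prod, map_zsmul, hzeq i] at h2
    have hprod : (∏ j ∈ Finset.univ.erase i, toQ (Gr m) (Pel' ℤ m j))
        = ∏ j ∈ Finset.univ.erase i, Pel' ℚ m j :=
      Finset.prod_congr rfl (fun j _ => toQ_P m j)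
    rw [hprod] at h2
    rw [← Int.cast_smul_eq_zsmul ℚ (D : ℤ) (toQ (Gr m) (w i))] at h2
    push_cast at h2
    rw [smul_sub]
    linear_combination h2
  have hQzero : ∀ i j : Fin n, j ≠ i →
      (∏ l ∈ Finset.univ.erase i, Pel' ℚ m l) * Xel' ℚ m j = 0 := by
    intro i j hne
    have hmem : j ∈ Finset.univ.erase i := Finset.mem_erase.mpr ⟨hne, Finset.mem_univ j⟩
    rw [← Finset.mul_prod_erase _ _ hmem]
    calc Pel' ℚ m j * (∏ l ∈ (Finset.univ.erase i).erase j, Pel' ℚ m l) * Xel' ℚ m j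
        = (Pel' ℚ m j * Xel' ℚ m j) * ∏ l ∈ (Finset.univ.erase i).erase j, Pel' ℚ m l := by
          ring
      _ = 0 := by rw [Pel'_mul_Xel']; ring
  intro i j
  rcases eq_or_ne i j with heq | hne
  · subst heq; rfl
  show (r i - toQ (Gr m) (w i)) * Xel' ℚ m j = (r j - toQ (Gr m) (w j)) * Xel' ℚ m i
  have hD' : (D : ℚ) ≠ 0 := Nat.cast_ne_zero.mpr hD0
  have hsmul : (D : ℚ) • ((r i - toQ (Gr m) (w i)) * Xel' ℚ m j)
      = (D : ℚ) • ((r j - toQ (Gr m) (w j)) * Xel' ℚ m i) := by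
    rw [← smul_mul_assoc, ← smul_mul_assoc, key i, key j]
    linear_combination (toQ (Gr m) (c i)) * hQzero i j (Ne.symm hne)
      - (toQ (Gr m) (c j)) * hQzero j i hne
  have := congrArg (fun x : QG (Gr m) => (D : ℚ)⁻¹ • x) hsmul
  simpa [smul_smul, inv_mul_cancel₀ hD'] using this
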